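/- Let (M_n) be a weight sequence such that the sum over n of M_n/M_{n+1} converges. Then lim_{n→∞} (n!/M_n)^{1/n} = 0, i.e. every non-quasi-analytic weight sequence is non-analytic. -/

import Mathlib

open Filter Real Finset Topology

theorem non_quasi_analytic_implies_non_analytic
    (M : ℕ → ℝ) (hpos : ∀ n, 0 < M n) (hM0 : M 0 = 1)
    (hbin : ∀ n m : ℕ, (((n + m).choose n : ℕ) : ℝ) * M n * M m ≤ M (n + m))
    (hsum : Summable fun n : ℕ => M n / M (n + 1)) :
    Filter.Tendsto (fun n : ℕ => ((n.factorial : ℝ) / M n) ^ ((1 : ℝ) / n))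
      Filter.atTop (nhds 0) := by
  set c : ℕ → ℝ := fun n => M n / M (n + 1) with hc
  have hcpos : ∀ n, 0 < c n := fun n => div_pos (hpos n) (hpos (n + 1))
  have key : ∀ δ : ℝ, 0 < δ → ∀ᶠ n : ℕ in atTop, (n.factorial : ℝ) / M n < δ ^ n := by
    intro δ hδ
    set ε := min (1 / 2 : ℝ) (δ / 2) with hεdef
    have hε0 : 0 < ε := lt_min (by norm_num) (by linarith)
    have hεδ : ε < δ := lt_of_le_of_lt (min_le_right _ _) (by linarith)
    obtain ⟨m, hm⟩ : ∃ m : ℕ, ∑' k, c (k + m) < ε :=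
      ((tendsto_sum_nat_add c).eventually_lt_const hε0).exists
    have hsummable_tail : Summable fun k => c (k + m) := (summable_nat_add_iff m).2 hsum
    have tel : ∀ n : ℕ, m ≤ n → M m / M n = ∏ k ∈ Ico m n, c k := by
      intro n hn
      induction n, hn using Nat.le_induction with
      | base => simp [div_self (hpos m).ne']
      | succ n hn ih =>
        rw [Finset.prod_Ico_succ_top hn, ← ih]
        have h1 : M n ≠ 0 := (hpos n).ne'
        field_simp [c]
        simp only [hc]
        ring
    set C : ℝ := Real.exp m / (M m * ε ^ m) with hCdef
    have hC : 0 < C := div_pos (Real.exp_pos _) (mul_pos (hpos m) (pow_pos hε0 m))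
    have hlim : Tendsto (fun n : ℕ => (n : ℝ) ^ m * (ε / δ) ^ n) atTop (𝓝 0) :=
      tendsto_pow_const_mul_const_pow_of_lt_one m (div_pos hε0 hδ).le
        ((div_lt_one hδ).2 hεδ)
    have hev : ∀ᶠ n : ℕ in atTop, (n : ℝ) ^ m * (ε / δ) ^ n < 1 / C :=
      hlim.eventually_lt_const (by positivity)
    filter_upwards [hev, eventually_ge_atTop (m + 1)] with n hn1 hn2
    have hmn : m ≤ n := Nat.le_of_succ_le hn2
    set N : ℕ := n - m with hNdef
    have hN1 : 1 ≤ N := by omega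
    have hNpos : (0 : ℝ) < N := by exact_mod_cast hN1
    have hcast : (n : ℝ) = (m : ℝ) + N := by
      have h : n = m + N := by omega
      rw [h]; push_cast; ring
    set S : ℝ := ∑ k ∈ Ico m n, c k with hSdef
    have hS0 : 0 ≤ S := Finset.sum_nonneg fun k _ => (hcpos k).le
    have hSε : S ≤ ε := by
      have h1 : S = ∑ k ∈ range N, c (k + m) := by
        rw [hSdef, Finset.sum_Ico_eq_sum_range]
        exact Finset.sum_congr rfl fun k _ => by rw [add_comm]
      rw [h1]
      exact le_trans (Summable.sum_le_tsum (range N) (fun k _ => (hcpos _).le) hsummable_tail) hm.le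
    have hcard : (Ico m n).card = N := by rw [Nat.card_Ico]
    have amgm : ∏ k ∈ Ico m n, c k ≤ (S / N) ^ N := by
      have hw : ∑ _k ∈ Ico m n, (1 : ℝ) / N = 1 := by
        rw [Finset.sum_const, hcard, nsmul_eq_mul]
        field_simp
      have h := Real.geom_mean_le_arith_mean_weighted (Ico m n) (fun _ => (1 : ℝ) / N) c
        (fun i _ => by positivity) hw (fun i _ => (hcpos i).le)
      have hprod : ∏ k ∈ Ico m n, c k = (∏ k ∈ Ico m n, c k ^ ((1 : ℝ) / N)) ^ N := by
        rw [← Finset.prod_pow]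
        refine Finset.prod_congr rfl fun k _ => ?_
        rw [← Real.rpow_natCast (c k ^ ((1 : ℝ) / N)) N, ← Real.rpow_mul (hcpos k).le]
        rw [one_div, inv_mul_cancel₀ hNpos.ne', Real.rpow_one]
      have hrhs : ∑ i ∈ Ico m n, (1 : ℝ) / N * c i = S / N := by
        rw [← Finset.mul_sum, ← hSdef, mul_comm, ← div_eq_mul_one_div]
      rw [hprod]
      calc (∏ k ∈ Ico m n, c k ^ ((1 : ℝ) / N)) ^ N
          ≤ (∑ i ∈ Ico m n, (1 : ℝ) / N * c i) ^ N := by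
            apply pow_le_pow_left₀
              (Finset.prod_nonneg fun k _ => Real.rpow_nonneg (hcpos k).le _) h
        _ = (S / N) ^ N := by rw [hrhs]
    have step1 : (n.factorial : ℝ) / M n ≤ (n.factorial : ℝ) / M m * (ε / N) ^ N := by
      have h1 : (n.factorial : ℝ) / M n = (n.factorial : ℝ) / M m * (M m / M n) := by
        rw [div_mul_div_comm, mul_comm (M m) (M n), mul_div_mul_right _ _ (hpos m).ne']
      rw [h1, tel n hmn]
      apply mul_le_mul_of_nonneg_left _ (div_nonneg (Nat.cast_nonneg _) (hpos m).le)
      calc ∏ k ∈ Ico m n, c k ≤ (S / N) ^ N := amgm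
        _ ≤ (ε / N) ^ N := by gcongr
    have hfact : (n.factorial : ℝ) ≤ (n : ℝ) ^ n := by exact_mod_cast Nat.factorial_le_pow n
    have hquot : ((n : ℝ) / N) ^ N ≤ Real.exp m := by
      have h1 : (n : ℝ) / N = 1 + (m : ℝ) / N := by rw [hcast]; field_simp; ring
      have h2 : 1 + (m : ℝ) / N ≤ Real.exp ((m : ℝ) / N) := by
        have := Real.add_one_le_exp ((m : ℝ) / N); linarith
      calc ((n : ℝ) / N) ^ N ≤ (Real.exp ((m : ℝ) / N)) ^ N := by
            rw [h1]; exact pow_le_pow_left₀ (by positivity) h2 N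
        _ = Real.exp m := by
            rw [← Real.exp_nat_mul]
            congr 1
            field_simp
    have hpowsplit : (n : ℝ) ^ n = (n : ℝ) ^ m * (n : ℝ) ^ N := by
      rw [← pow_add]; congr 1; omega
    have hεN : ε ^ N = ε ^ n / ε ^ m := pow_sub₀ ε hε0.ne' hmn
    have hquot' : (n : ℝ) ^ N / (N : ℝ) ^ N ≤ Real.exp m := by
      rw [← div_pow]; exact hquot
    have step2 : (n.factorial : ℝ) / M m * (ε / N) ^ N ≤ C * (n : ℝ) ^ m * ε ^ n := by
      calc (n.factorial : ℝ) / M m * (ε / N) ^ N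
          ≤ (n : ℝ) ^ n / M m * (ε / N) ^ N := by gcongr; exact (hpos m).le
        _ = (n : ℝ) ^ m * ((n : ℝ) ^ N / (N : ℝ) ^ N) * ε ^ N / M m := by
            rw [hpowsplit, div_pow]; ring
        _ ≤ (n : ℝ) ^ m * Real.exp m * ε ^ N / M m := by
            gcongr
            all_goals first
              | exact hquot'
              | exact (hpos m).le
              | positivity
        _ = C * (n : ℝ) ^ m * ε ^ n := by
            rw [hεN, hCdef]
            field_simp
    have hεδpow : C * (n : ℝ) ^ m * ε ^ n < δ ^ n := by
      have h1 : C * ((n : ℝ) ^ m * (ε / δ) ^ n) < 1 := by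
        have := mul_lt_mul_of_pos_left hn1 hC
        rwa [mul_one_div, div_self hC.ne'] at this
      have h2 := mul_lt_mul_of_pos_right h1 (pow_pos hδ n)
      rw [one_mul] at h2
      calc C * (n : ℝ) ^ m * ε ^ n
          = C * ((n : ℝ) ^ m * (ε / δ) ^ n) * δ ^ n := by
            rw [div_pow]
            field_simp
        _ < δ ^ n := h2
    exact lt_of_le_of_lt (step1.trans step2) hεδpow
  rw [NormedAddCommGroup.tendsto_nhds_zero]
  intro δ hδ
  filter_upwards [key δ hδ, eventually_ge_atTop 1] with n hn h1
  have hn0 : (0 : ℝ) < (n : ℝ) := by exact_mod_cast h1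
  have hbase : (0 : ℝ) ≤ (n.factorial : ℝ) / M n := div_nonneg (Nat.cast_nonneg _) (hpos n).le
  rw [Real.norm_eq_abs, abs_of_nonneg (Real.rpow_nonneg hbase _)]
  calc ((n.factorial : ℝ) / M n) ^ ((1 : ℝ) / n)
      < (δ ^ n) ^ ((1 : ℝ) / n) := Real.rpow_lt_rpow hbase hn (by positivity)
    _ = δ := by
        rw [← Real.rpow_natCast δ n, ← Real.rpow_mul hδ.le]
        rw [mul_one_div, div_self hn0.ne', Real.rpow_one]
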